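/- Let W_{n,k}^d be the set of weighted oriented partitions of [n] in which all n weights are distinct (hence equal to {0,...,n-1}). The map sending ρ ∈ W_{n,k}^d to the pair (σ, β), where σ ∈ S_n is the unique permutation with w(ρ) = x_1^{σ(1)−1}···x_n^{σ(n)−1} and β ∈ R_{n,k} is the set of weight compositions of ρ, is a bijection between W_{n,k}^d and S_n × R_{n,k}. -/

import Mathlib

open Finset Equiv MvPolynomial

open scoped Classical

noncomputable section

/-- The position of the `j`-th element of the `i`-th block. -/
def bpos (m k : ℕ) (i : Fin m) (j : Fin k) : Fin (m * k) :=
  ⟨k * (i : ℕ) + (j : ℕ), by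
    have hi := i.isLt
    have hj := j.isLt
    calc k * (i : ℕ) + (j : ℕ) < k * (i : ℕ) + k := by omega
      _ = k * ((i : ℕ) + 1) := by ring
      _ ≤ k * m := Nat.mul_le_mul_left k hi
      _ = m * k := Nat.mul_comm k m⟩

/-- Each block of the (oriented) partition is listed in increasing order. -/
def IsBlockMono (m k : ℕ) (π : Equiv.Perm (Fin (m * k))) : Prop :=
  ∀ i : Fin m, StrictMono fun j : Fin k => π (bpos m k i j)

/-- The blocks are listed in increasing order of their first elements. -/
def IsLeadMono (m k : ℕ) (π : Equiv.Perm (Fin (m * k))) : Prop :=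
  ∀ (i i' : Fin m) (j : Fin k), i < i' →
    π (bpos m k i ⟨0, j.pos⟩) < π (bpos m k i' ⟨0, j.pos⟩)

/-- Canonical representative of a set partition of `[n]`, `n = m*k`, into `m` blocks of
size `k`: each block increasing and blocks ordered by their minima. -/
def IsPartRep (m k : ℕ) (π : Equiv.Perm (Fin (m * k))) : Prop :=
  IsBlockMono m k π ∧ IsLeadMono m k π

/-- A `k`-ary function is skew-symmetric. -/
def IsSkewFun {k : ℕ} {α R : Type*} [CommRing R] (f : (Fin k → α) → R) : Prop :=
  ∀ (σ : Equiv.Perm (Fin k)) (v : Fin k → α),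
    f (v ∘ σ) = (Equiv.Perm.sign σ : ℤ) • f v

/-- The hyperpfaffian of a skew-symmetric `k`-ary function on `[m*k]`:
the signed sum over all set partitions of `[m*k]` into `m` blocks of size `k`. -/
def hyperPf (m k : ℕ) {R : Type*} [CommRing R]
    (f : (Fin k → Fin (m * k)) → R) : R :=
  ∑ π ∈ Finset.univ.filter (IsPartRep m k),
    (Equiv.Perm.sign π : ℤ) • ∏ i : Fin m, f fun j => π (bpos m k i j)

/-- A polynomial in `k` variables is skew-symmetric. -/
def IsSkewPoly {k : ℕ} {R : Type*} [CommRing R] (f : MvPolynomial (Fin k) R) : Prop :=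
  ∀ σ : Equiv.Perm (Fin k),
    MvPolynomial.rename (⇑σ) f = (Equiv.Perm.sign σ : ℤ) • f

/-- The hyperpfaffian `Pf (f(x_S))` of the values of a polynomial `f` in `k` variables
at the variables indexed by the `k`-subsets `S` of `[m*k]`. -/
def hyperPfPoly (m k : ℕ) {R : Type*} [CommRing R]
    (f : MvPolynomial (Fin k) R) : MvPolynomial (Fin (m * k)) R :=
  ∑ π ∈ Finset.univ.filter (IsPartRep m k),
    (Equiv.Perm.sign π : ℤ) •
      ∏ i : Fin m, MvPolynomial.rename (fun j => π (bpos m k i j)) f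

/-- The Vandermonde product. -/
def vand (n : ℕ) (R : Type*) [CommRing R] : MvPolynomial (Fin n) R :=
  ∏ p ∈ Finset.univ.filter (fun p : Fin n × Fin n => p.1 < p.2),
    (MvPolynomial.X p.2 - MvPolynomial.X p.1)

/-- The coefficient of `f` at the monomial with exponent vector `r`. -/
def coeffOf {k : ℕ} {R : Type*} [CommRing R] (f : MvPolynomial (Fin k) R)
    (r : Fin k → ℕ) : R :=
  MvPolynomial.coeff (Finsupp.equivFunOnFinite.symm r) f

/-- Membership in `Γ_{n,k}`: a strictly increasing composition of `k/2*(n-1)`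
into `k` distinct nonnegative parts. -/
def InGamma (n k : ℕ) (r : Fin k → ℕ) : Prop :=
  StrictMono r ∧ ∑ j, r j = k / 2 * (n - 1)

/-- Canonical representative of an element `β` of `R_{n,k}`, encoded as a permutation `e` of
`Fin (m*k)` (identified with `{0,…,n-1}`): the blocks of `e` are the compositions of `β`,
each block is increasing and sums to `k/2*(n-1)`, and the blocks are ordered canonically. -/
def IsWeightRep (m k : ℕ) (e : Equiv.Perm (Fin (m * k))) : Prop :=
  IsPartRep m k e ∧
    ∀ i : Fin m, ∑ j : Fin k, ((e (bpos m k i j)) : ℕ) = k / 2 * (m * k - 1)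

/-- The weight of the element `x` of `[m*k]` in the weighted oriented partition with
oriented partition (representative) `π` and weight vectors `w`. -/
def wtOf (m k : ℕ) (π : Equiv.Perm (Fin (m * k))) (w : Fin m → Fin k → ℕ) :
    Fin (m * k) → ℕ := fun x =>
  w ⟨((π.symm x : Fin (m*k)) : ℕ) / k, Nat.div_lt_of_lt_mul (lt_of_lt_of_le (π.symm x).isLt (le_of_eq (Nat.mul_comm m k)))⟩
    ⟨((π.symm x : Fin (m*k)) : ℕ) % k, Nat.mod_lt _ (by
      have ht := (π.symm x).isLt
      have hk : k ≠ 0 := by rintro rfl; omega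
      omega)⟩

end
/-- The set `W_{n,k}^d` of weighted oriented partitions with distinct weights:
pairs of a canonical representative of an oriented partition and a choice of a
weight vector in `Γ_{n,k}` for each block, such that all `n` weights are distinct. -/
noncomputable def Wd (m k : ℕ) :
    Finset (Equiv.Perm (Fin (m * k)) ×
      (Fin m → Fin k → Fin (k / 2 * (m * k - 1) + 1))) :=
  Finset.univ.filter fun ρ =>
    IsLeadMono m k ρ.1 ∧ (∀ i : Fin m, InGamma (m * k) k fun j => (ρ.2 i j : ℕ)) ∧
      Function.Injective (wtOf m k ρ.1 fun i j => (ρ.2 i j : ℕ))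

/-- `ρ` corresponds to the pair `(σ, e)`: the weight of each element `x` is the
exponent `σ x`, and the family of weight vectors of `ρ` is the family `β`
represented by `e`, up to reordering of the blocks. -/
def RelWd (m k : ℕ)
    (ρ : Equiv.Perm (Fin (m * k)) × (Fin m → Fin k → Fin (k / 2 * (m * k - 1) + 1)))
    (p : Equiv.Perm (Fin (m * k)) × Equiv.Perm (Fin (m * k))) : Prop :=
  (∀ x, wtOf m k ρ.1 (fun i j => (ρ.2 i j : ℕ)) x = (p.1 x : ℕ)) ∧
  (∃ ν : Equiv.Perm (Fin m), ∀ (i : Fin m) (j : Fin k),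
    ((p.2 (bpos m k (ν i) j)) : ℕ) = (ρ.2 i j : ℕ))


section Aux
variable {m k : ℕ}

lemma bpos_val (i : Fin m) (j : Fin k) : (bpos m k i j : ℕ) = k * i + j := rfl

lemma bpos_inj : Function.Injective (fun p : Fin m × Fin k => bpos m k p.1 p.2) := by
  rintro ⟨i, j⟩ ⟨i', j'⟩ h
  have hk : 0 < k := j.pos
  have h' : k * (i:ℕ) + j = k * (i':ℕ) + j' := congrArg Fin.val h
  have hi : (i:ℕ) = i' := by
    have := congrArg (· / k) h'
    simpa [Nat.mul_add_div hk, Nat.div_eq_of_lt j.isLt, Nat.div_eq_of_lt j'.isLt] using this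
  have hj := j.isLt
  rw [hi] at h'
  simp only [Prod.mk.injEq]
  exact ⟨Fin.ext hi, Fin.ext (by omega)⟩

noncomputable def pEquiv (m k : ℕ) : Fin m × Fin k ≃ Fin (m * k) :=
  Equiv.ofBijective (fun p => bpos m k p.1 p.2)
    ((Fintype.bijective_iff_injective_and_card _).2 ⟨bpos_inj, by simp⟩)

@[simp] lemma pEquiv_apply (i : Fin m) (j : Fin k) : pEquiv m k (i, j) = bpos m k i j := rfl

@[simp] lemma pEquiv_symm_bpos (i : Fin m) (j : Fin k) :
    (pEquiv m k).symm (bpos m k i j) = (i, j) := (Equiv.symm_apply_eq _).2 rfl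

lemma bpos_decode (hk : 0 < k) (x : Fin (m * k)) :
    bpos m k ⟨(x:ℕ)/k, Nat.div_lt_of_lt_mul (Nat.lt_of_lt_of_le x.isLt (Nat.mul_comm m k).le)⟩
      ⟨(x:ℕ)%k, Nat.mod_lt _ hk⟩ = x := by
  apply Fin.ext
  simp [bpos_val, Nat.div_add_mod]

lemma bpos_surj (hk : 0 < k) (x : Fin (m * k)) : ∃ i j, x = bpos m k i j :=
  ⟨_, _, (bpos_decode hk x).symm⟩

lemma wtOf_eq (π : Equiv.Perm (Fin (m*k))) (w : Fin m → Fin k → ℕ) (x : Fin (m*k)) :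
    wtOf m k π w x = w ((pEquiv m k).symm (π.symm x)).1 ((pEquiv m k).symm (π.symm x)).2 := by
  have hk : 0 < k := by
    rcases Nat.eq_zero_or_pos k with rfl | h
    · exact absurd x.isLt (by simp)
    · exact h
  have hd := bpos_decode hk (π.symm x)
  conv_rhs => rw [← hd, pEquiv_symm_bpos]
  rfl

lemma wtOf_apply (π : Equiv.Perm (Fin (m*k))) (w : Fin m → Fin k → ℕ) (i : Fin m) (j : Fin k) :
    wtOf m k π w (π (bpos m k i j)) = w i j := by
  rw [wtOf_eq]
  simp

lemma sum_wtOf (π : Equiv.Perm (Fin (m*k))) (w : Fin m → Fin k → ℕ) :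
    ∑ x, wtOf m k π w x = ∑ i : Fin m, ∑ j : Fin k, w i j := by
  rw [← Fintype.sum_prod_type']
  exact (Fintype.sum_bijective (fun p : Fin m × Fin k => π (bpos m k p.1 p.2))
    (Equiv.bijective ((pEquiv m k).trans π)) _ _
    (fun p => (wtOf_apply π w p.1 p.2).symm)).symm

lemma finset_sum_lb (S : Finset ℕ) : S.card * (S.card - 1) ≤ 2 * ∑ s ∈ S, s := by
  induction S using Finset.strongInduction with
  | _ S ih =>
    rcases S.eq_empty_or_nonempty with rfl | hS
    · simp
    · have hMS : S.max' hS ∈ S := S.max'_mem hS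
      set M := S.max' hS with hM
      have h1 : S ⊆ Finset.range (M+1) := fun s hs => Finset.mem_range.2 (Nat.lt_succ_of_le (S.le_max' s hs))
      have hcard : S.card ≤ M + 1 := le_trans (Finset.card_le_card h1) (by simp)
      have h2 := ih (S.erase M) (Finset.erase_ssubset hMS)
      have h3 : (S.erase M).card = S.card - 1 := Finset.card_erase_of_mem hMS
      have h4 : ∑ s ∈ S, s = M + ∑ s ∈ S.erase M, s := (Finset.add_sum_erase S id hMS).symm
      rw [h3] at h2
      rw [h4]
      have hc1 : 1 ≤ S.card := Finset.card_pos.2 hS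
      obtain ⟨c, hc⟩ : ∃ c, S.card = c + 1 := ⟨S.card - 1, by omega⟩
      rw [hc] at hcard h2 ⊢
      simp only [Nat.add_sub_cancel] at h2 ⊢
      rcases c with _ | d
      · simp
      · simp only [Nat.add_sub_cancel] at h2
        nlinarith [h2, hcard]

lemma inj_sum_lt {n : ℕ} (f : Fin n → ℕ) (hf : Function.Injective f)
    (hs : 2 * ∑ x, f x = n * (n - 1)) : ∀ x, f x < n := by
  intro x
  by_contra hx
  push_neg at hx
  set S := Finset.image f Finset.univ with hS
  have hcard : S.card = n := by
    rw [hS, Finset.card_image_of_injective _ hf, Finset.card_univ, Fintype.card_fin]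
  have hsum : ∑ s ∈ S, s = ∑ y, f y := Finset.sum_image (fun a _ b _ h => hf h)
  have hmem : f x ∈ S := Finset.mem_image_of_mem f (Finset.mem_univ x)
  have h4 : ∑ s ∈ S, s = f x + ∑ s ∈ S.erase (f x), s := (Finset.add_sum_erase S id hmem).symm
  have h2 := finset_sum_lb (S.erase (f x))
  rw [Finset.card_erase_of_mem hmem, hcard] at h2
  have hn : 1 ≤ n := by have := x.isLt; omega
  obtain ⟨e, rfl⟩ : ∃ e, n = e + 1 := ⟨n - 1, by omega⟩
  rw [← hsum, h4] at hs
  simp only [Nat.add_sub_cancel] at hs h2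
  rcases e with _ | d
  · simp at hs
    omega
  · simp only [Nat.add_sub_cancel] at h2
    nlinarith [hs, h2, hx]

end Aux

theorem stmt9 (m k : ℕ) (hk : Even k) :
    (∀ ρ ∈ Wd m k, ∃! p,
      p ∈ (Finset.univ : Finset (Equiv.Perm (Fin (m * k)))) ×ˢ
          Finset.univ.filter (IsWeightRep m k) ∧ RelWd m k ρ p) ∧
    (∀ p ∈ (Finset.univ : Finset (Equiv.Perm (Fin (m * k)))) ×ˢ
        Finset.univ.filter (IsWeightRep m k),
      ∃! ρ, ρ ∈ Wd m k ∧ RelWd m k ρ p) := by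
  classical
  rcases Nat.eq_zero_or_pos (m * k) with hmk | hmk
  · -- degenerate case `m * k = 0`
    have hfe : ∀ x : Fin (m * k), False := fun x => by have := x.isLt; omega
    have hP : ∀ π π' : Equiv.Perm (Fin (m * k)), π = π' :=
      fun π π' => Equiv.ext fun x => (hfe x).elim
    have hN0 : k / 2 * (m * k - 1) = 0 := by
      rw [show m * k - 1 = 0 from by omega]; simp
    have hW : ∀ w w' : Fin m → Fin k → Fin (k / 2 * (m * k - 1) + 1), w = w' := by
      intro w w'
      funext i j
      apply Fin.ext
      have h1 := (w i j).isLt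
      have h2 := (w' i j).isLt
      omega
    have hkz : ∀ i : Fin m, k = 0 := by
      intro i
      have := i.isLt
      rcases Nat.mul_eq_zero.mp (by omega : m * k = 0) with h | h
      · omega
      · exact h
    have hInWd : ∀ ρ, ρ ∈ Wd m k := by
      intro ρ
      rw [Wd, Finset.mem_filter]
      refine ⟨Finset.mem_univ _, ?_, ?_, ?_⟩
      · intro i i' j hlt; exact (hfe (bpos m k i ⟨0, j.pos⟩)).elim
      · intro i
        have hk0 := hkz i
        constructor
        · intro a b hab; exact (hfe (bpos m k i a)).elim
        · subst hk0
          simp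
      · intro x y hxy; exact (hfe x).elim
    have hRep : ∀ e : Equiv.Perm (Fin (m * k)), IsWeightRep m k e := by
      intro e
      refine ⟨⟨?_, ?_⟩, ?_⟩
      · intro i a b hab; exact (hfe (bpos m k i a)).elim
      · intro i i' j hlt; exact (hfe (bpos m k i ⟨0, j.pos⟩)).elim
      · intro i
        have hk0 := hkz i
        subst hk0
        simp
    have hRel : ∀ ρ p, RelWd m k ρ p := by
      intro ρ p
      constructor
      · intro x; exact (hfe x).elim
      · exact ⟨Equiv.refl _, fun i j => (hfe (bpos m k i j)).elim⟩
    constructor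
    · intro ρ _
      refine ⟨(1, 1), ⟨Finset.mem_product.2 ⟨Finset.mem_univ _,
        Finset.mem_filter.2 ⟨Finset.mem_univ _, hRep 1⟩⟩, hRel ρ (1, 1)⟩, ?_⟩
      intro p' _
      obtain ⟨p1, p2⟩ := p'
      exact congrArg₂ Prod.mk (hP _ _) (hP _ _)
    · intro p _
      refine ⟨(1, fun _ _ => ⟨0, Nat.succ_pos _⟩), ⟨hInWd _, hRel _ p⟩, ?_⟩
      intro ρ' _
      obtain ⟨r1, r2⟩ := ρ'
      exact congrArg₂ Prod.mk (hP _ _) (hW _ _)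
  · -- main case `0 < m * k`
    have hm0 : 0 < m ∧ 0 < k := by
      rcases Nat.eq_zero_or_pos m with rfl | h
      · simp at hmk
      · rcases Nat.eq_zero_or_pos k with rfl | h'
        · simp at hmk
        · exact ⟨h, h'⟩
    obtain ⟨hm, hk0⟩ := hm0
    have h2k : k / 2 * 2 = k := Nat.div_mul_cancel hk.two_dvd
    have h2k' : 2 * (k / 2) = k := by omega
    have hk2 : 1 ≤ k / 2 := by omega
    constructor
    · -- forward direction
      rintro ⟨π, w⟩ hρ
      simp only [Wd, Finset.mem_filter, Finset.mem_univ, true_and] at hρ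
      obtain ⟨hlead, hγ, hinj⟩ := hρ
      set W : Fin m → Fin k → ℕ := fun i j => (w i j : ℕ) with hWdef
      -- all weights are < m * k
      have hsum : ∑ x, wtOf m k π W x = m * (k / 2 * (m * k - 1)) := by
        rw [sum_wtOf, Finset.sum_congr rfl (fun i _ => (hγ i).2)]
        simp [mul_comm]
      have h2s : 2 * ∑ x, wtOf m k π W x = m * k * (m * k - 1) := by
        rw [hsum]
        calc 2 * (m * (k / 2 * (m * k - 1))) = m * (2 * (k / 2)) * (m * k - 1) := by ring
          _ = m * k * (m * k - 1) := by rw [h2k']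
      have hlt : ∀ x, wtOf m k π W x < m * k := inj_sum_lt _ hinj h2s
      have hWlt : ∀ i j, W i j < m * k := fun i j => wtOf_apply π W i j ▸ hlt (π (bpos m k i j))
      have hWinj : Function.Injective (fun p : Fin m × Fin k => W p.1 p.2) := by
        intro p q h
        have h1 : wtOf m k π W (π (bpos m k p.1 p.2)) = wtOf m k π W (π (bpos m k q.1 q.2)) := by
          rw [wtOf_apply, wtOf_apply]; exact h
        exact bpos_inj (π.injective (hinj h1))
      -- the permutation σ
      have hσinj : Function.Injective
          (fun x : Fin (m * k) => (⟨wtOf m k π W x, hlt x⟩ : Fin (m * k))) := by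
        intro x y hxy
        exact hinj (by simpa using congrArg Fin.val hxy)
      set σ : Equiv.Perm (Fin (m * k)) := Equiv.ofBijective _
        ((Fintype.bijective_iff_injective_and_card _).2 ⟨hσinj, rfl⟩) with hσdef
      have hσval : ∀ x, (σ x : ℕ) = wtOf m k π W x := fun x => rfl
      -- the lead values and the sorting permutation
      set L : Fin m → ℕ := fun i => W i ⟨0, hk0⟩ with hLdef
      have hLinj : Function.Injective L := by
        intro i i' h
        have := hWinj (show (fun p : Fin m × Fin k => W p.1 p.2) (i, ⟨0, hk0⟩)
          = (fun p : Fin m × Fin k => W p.1 p.2) (i', ⟨0, hk0⟩) from h)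
        exact congrArg Prod.fst this
      set τ : Equiv.Perm (Fin m) := Tuple.sort L with hτdef
      have hτmono : Monotone (L ∘ τ) := Tuple.monotone_sort L
      have hτsm : StrictMono (L ∘ τ) := hτmono.strictMono_of_injective (hLinj.comp τ.injective)
      -- the canonical representative e
      set g : Fin m → Fin k → Fin (m * k) := fun i j => ⟨W (τ i) j, hWlt _ _⟩ with hgdef
      have hginj : Function.Injective (fun p : Fin m × Fin k => g p.1 p.2) := by
        rintro ⟨a, b⟩ ⟨c, d⟩ h
        have h' : g a b = g c d := h
        have hv : W (τ a) b = W (τ c) d := by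
          have hvv := congrArg Fin.val h'
          simpa [hgdef] using hvv
        have := hWinj (show (fun p : Fin m × Fin k => W p.1 p.2) (τ a, b)
          = (fun p : Fin m × Fin k => W p.1 p.2) (τ c, d) from hv)
        simp only [Prod.mk.injEq] at this ⊢
        exact ⟨τ.injective this.1, this.2⟩
      set e : Equiv.Perm (Fin (m * k)) := Equiv.ofBijective
        (fun x => g ((pEquiv m k).symm x).1 ((pEquiv m k).symm x).2)
        ((Fintype.bijective_iff_injective_and_card _).2
          ⟨fun x y hxy => (pEquiv m k).symm.injective
            (by
              have := hginj (show (fun p : Fin m × Fin k => g p.1 p.2) ((pEquiv m k).symm x)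
                = (fun p : Fin m × Fin k => g p.1 p.2) ((pEquiv m k).symm y) from hxy)
              exact this), rfl⟩) with hedef
      have he : ∀ (i : Fin m) (j : Fin k), e (bpos m k i j) = g i j := by
        intro i j
        show g ((pEquiv m k).symm (bpos m k i j)).1 ((pEquiv m k).symm (bpos m k i j)).2 = g i j
        rw [pEquiv_symm_bpos]
      have hWR : IsWeightRep m k e := by
        refine ⟨⟨?_, ?_⟩, ?_⟩
        · intro i a b hab
          show e (bpos m k i a) < e (bpos m k i b)
          rw [he, he]
          exact Fin.mk_lt_mk.2 ((hγ (τ i)).1 hab)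
        · intro i i' j hlt'
          rw [he, he]
          exact Fin.mk_lt_mk.2 (hτsm hlt')
        · intro i
          calc ∑ j : Fin k, ((e (bpos m k i j)) : ℕ) = ∑ j : Fin k, W (τ i) j := by
                refine Finset.sum_congr rfl fun j _ => ?_
                rw [he]
            _ = k / 2 * (m * k - 1) := (hγ (τ i)).2
      refine ⟨(σ, e), ⟨Finset.mem_product.2 ⟨Finset.mem_univ _,
        Finset.mem_filter.2 ⟨Finset.mem_univ _, hWR⟩⟩, fun x => rfl, τ⁻¹, fun i j => ?_⟩, ?_⟩
      · rw [he]
        show W (τ (τ⁻¹ i)) j = W i j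
        rw [Equiv.Perm.inv_def, Equiv.apply_symm_apply]
      · -- uniqueness
        rintro ⟨σ', e'⟩ ⟨hmem', hrel1', ν', hν'⟩
        have hWR' : IsWeightRep m k e' :=
          (Finset.mem_filter.1 (Finset.mem_product.1 hmem').2).2
        have hσeq : σ' = σ := by
          apply Equiv.ext
          intro x
          apply Fin.ext
          exact (hrel1' x).symm.trans (hσval x).symm
        have hG'sm : StrictMono (fun i : Fin m => ((e' (bpos m k i ⟨0, hk0⟩)) : ℕ)) := by
          intro a b hab
          exact Fin.lt_iff_val_lt_val.1 (hWR'.1.2 a b ⟨0, hk0⟩ hab)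
        have hmono1 : Monotone (L ∘ ⇑ν'⁻¹) := by
          have hfun : (L ∘ ⇑ν'⁻¹) = fun i => ((e' (bpos m k i ⟨0, hk0⟩)) : ℕ) := by
            funext i
            have h1 := hν' (ν'⁻¹ i) ⟨0, hk0⟩
            rw [Equiv.Perm.inv_def, Equiv.apply_symm_apply] at h1
            exact h1.symm
          rw [hfun]
          exact hG'sm.monotone
        have hu : L ∘ ⇑ν'⁻¹ = L ∘ ⇑τ := Tuple.unique_monotone hmono1 hτmono
        have hν'τ : ∀ i, ν'⁻¹ i = τ i := fun i => hLinj (congrFun hu i)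
        have heeq : e' = e := by
          apply Equiv.ext
          intro x
          obtain ⟨i, j, rfl⟩ := bpos_surj hk0 x
          have hi : i = ν' (τ i) := by rw [← hν'τ, Equiv.Perm.inv_def, Equiv.apply_symm_apply]
          apply Fin.ext
          rw [he]
          show ((e' (bpos m k i j)) : ℕ) = W (τ i) j
          conv_lhs => rw [hi]
          exact hν' (τ i) j
        rw [hσeq, heeq]
    · -- backward direction
      rintro ⟨σ, e⟩ hp
      have hWR : IsWeightRep m k e := (Finset.mem_filter.1 (Finset.mem_product.1 hp).2).2
      obtain ⟨⟨hbm, hlm⟩, hsums⟩ := hWR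
      set h : Fin m → Fin (m * k) := fun i => σ.symm (e (bpos m k i ⟨0, hk0⟩)) with hhdef
      have hhinj : Function.Injective h := by
        intro a b hab
        have h1 := e.injective (σ.symm.injective hab)
        have h2 := bpos_inj (show (fun p : Fin m × Fin k => bpos m k p.1 p.2) (a, ⟨0, hk0⟩)
          = (fun p : Fin m × Fin k => bpos m k p.1 p.2) (b, ⟨0, hk0⟩) from h1)
        exact congrArg Prod.fst h2
      set ν : Equiv.Perm (Fin m) := Tuple.sort h with hνdef
      have hνmono : Monotone (h ∘ ν) := Tuple.monotone_sort h
      have hνsm : StrictMono (h ∘ ν) := hνmono.strictMono_of_injective (hhinj.comp ν.injective)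
      have hNb : ∀ x : Fin (m * k), (x : ℕ) < k / 2 * (m * k - 1) + 1 := by
        intro x
        have h1 : m * k - 1 ≤ k / 2 * (m * k - 1) := Nat.le_mul_of_pos_left _ hk2
        have h2 := x.isLt
        omega
      set w : Fin m → Fin k → Fin (k / 2 * (m * k - 1) + 1) :=
        fun i j => ⟨(e (bpos m k (ν i) j) : ℕ), hNb _⟩ with hwdef
      set Bν : Equiv.Perm (Fin (m * k)) :=
        (pEquiv m k).symm.trans ((ν.prodCongr (Equiv.refl (Fin k))).trans (pEquiv m k)) with hBdef
      set π : Equiv.Perm (Fin (m * k)) := Bν.trans (e.trans σ.symm) with hπdef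
      have hπ : ∀ (i : Fin m) (j : Fin k),
          π (bpos m k i j) = σ.symm (e (bpos m k (ν i) j)) := by
        intro i j
        show σ.symm (e (Bν (bpos m k i j))) = _
        have hB : Bν (bpos m k i j) = bpos m k (ν i) j := by
          show pEquiv m k ((ν.prodCongr (Equiv.refl (Fin k))) ((pEquiv m k).symm (bpos m k i j)))
            = _
          rw [pEquiv_symm_bpos]
          rfl
        rw [hB]
      set W : Fin m → Fin k → ℕ := fun i j => (w i j : ℕ) with hWdef
      have hwt : ∀ x, wtOf m k π W x = (σ x : ℕ) := by
        intro x
        rw [wtOf_eq]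
        obtain ⟨i, j, hx⟩ := bpos_surj hk0 (π.symm x)
        rw [hx, pEquiv_symm_bpos]
        show ((e (bpos m k (ν i) j)) : ℕ) = (σ x : ℕ)
        have hx' : x = π (bpos m k i j) := by rw [← hx, Equiv.apply_symm_apply]
        rw [hx', hπ i j, Equiv.apply_symm_apply]
      have hmem : ((π, w) : Equiv.Perm (Fin (m * k)) ×
          (Fin m → Fin k → Fin (k / 2 * (m * k - 1) + 1))) ∈ Wd m k := by
        simp only [Wd, Finset.mem_filter, Finset.mem_univ, true_and]
        refine ⟨?_, ?_, ?_⟩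
        · intro i i' j hlt
          rw [hπ, hπ]
          exact hνsm hlt
        · intro i
          constructor
          · intro a b hab
            show ((e (bpos m k (ν i) a)) : ℕ) < ((e (bpos m k (ν i) b)) : ℕ)
            exact Fin.lt_iff_val_lt_val.1 (hbm (ν i) hab)
          · exact hsums (ν i)
        · intro x y hxy
          have h1 : (σ x : ℕ) = (σ y : ℕ) := by rw [← hwt x, ← hwt y]; exact hxy
          exact σ.injective (Fin.ext h1)
      refine ⟨(π, w), ⟨hmem, hwt, ν, fun i j => rfl⟩, ?_⟩
      rintro ⟨π', w'⟩ ⟨hmem', hrel1', ν'', hν''⟩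
      simp only [Wd, Finset.mem_filter, Finset.mem_univ, true_and] at hmem'
      obtain ⟨hlead', hγ', hinj'⟩ := hmem'
      have hstep : ∀ (i : Fin m) (j : Fin k),
          π' (bpos m k i j) = σ.symm (e (bpos m k (ν'' i) j)) := by
        intro i j
        have h1 : (σ (π' (bpos m k i j)) : ℕ) = ((e (bpos m k (ν'' i) j)) : ℕ) := by
          rw [← hrel1' (π' (bpos m k i j))]
          rw [wtOf_apply]
          exact (hν'' i j).symm
        have h2 : σ (π' (bpos m k i j)) = e (bpos m k (ν'' i) j) := Fin.ext h1
        rw [← h2, Equiv.symm_apply_apply]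
      have hmono1 : Monotone (h ∘ ⇑ν'') := by
        have hfun : (h ∘ ⇑ν'') = fun i => π' (bpos m k i ⟨0, hk0⟩) := by
          funext i
          show σ.symm (e (bpos m k (ν'' i) ⟨0, hk0⟩)) = _
          rw [← hstep i ⟨0, hk0⟩]
        have hsm' : StrictMono (fun i : Fin m => π' (bpos m k i ⟨0, hk0⟩)) :=
          fun a b hab => hlead' a b ⟨0, hk0⟩ hab
        rw [hfun]
        exact hsm'.monotone
      have hu : h ∘ ⇑ν'' = h ∘ ⇑ν := Tuple.unique_monotone hmono1 hνmono
      have hν''ν : ∀ i, ν'' i = ν i := fun i => hhinj (congrFun hu i)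
      have hπeq : π' = π := by
        apply Equiv.ext
        intro x
        obtain ⟨i, j, rfl⟩ := bpos_surj hk0 x
        rw [hstep i j, hν''ν, hπ]
      have hweq : w' = w := by
        funext i j
        apply Fin.ext
        have h1 := hν'' i j
        rw [hν''ν] at h1
        exact h1.symm
      rw [hπeq, hweq]
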